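/- For every F ∈ 𝓕 and n ≥ 0, the subfunctor ker(η_F : F → Δ^{n+1}F ⊗ Ī^{⊗(n+1)}), where η_F is the unit of the adjunction between Δ^{n+1} and − ⊗ Ī^{⊗(n+1)}, is polynomial of degree at most n and contains every subfunctor of F that is polynomial of degree at most n. Consequently the inclusion of the full subcategory of polynomial functors of degree at most n into 𝓕 admits a right adjoint p_n, given by p_nF = ker(η_F). -/

import Mathlib

open CategoryTheory CategoryTheory.Limits TensorProduct MonoidalCategory

noncomputable section

variable (p : ℕ) [Fact p.Prime]

/-- `k = F_p`. -/
abbrev Kk (p : ℕ) : Type := ZMod p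

/-- The category `𝓕` of functors from finite-dimensional `F_p`-vector spaces
to `F_p`-vector spaces. -/
abbrev FF (p : ℕ) [Fact p.Prime] := FGModuleCat.{0} (Kk p) ⥤ ModuleCat.{0} (Kk p)

/-- The functor `V ↦ V ⊕ k` on finite-dimensional vector spaces. -/
def addOne : FGModuleCat.{0} (Kk p) ⥤ FGModuleCat.{0} (Kk p) where
  obj V := FGModuleCat.of (Kk p) (V × Kk p)
  map f := FGModuleCat.ofHom (LinearMap.prodMap f.hom.hom (LinearMap.id (R := Kk p) (M := Kk p)))
  map_id := by intros; apply FGModuleCat.hom_ext; apply LinearMap.ext; intro x; rfl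
  map_comp := by intros; apply FGModuleCat.hom_ext; apply LinearMap.ext; intro x; rfl

/-- The natural inclusion `i_V : V → V ⊕ k`. -/
def inclOne : 𝟭 (FGModuleCat.{0} (Kk p)) ⟶ addOne p where
  app V := FGModuleCat.ofHom (LinearMap.inl (Kk p) V (Kk p) : V →ₗ[Kk p] V × Kk p)
  naturality := by intros; apply FGModuleCat.hom_ext; apply LinearMap.ext; intro x; rfl

/-- The natural projection `V ⊕ k → V`. -/
def projOne : addOne p ⟶ 𝟭 (FGModuleCat.{0} (Kk p)) where
  app V := FGModuleCat.ofHom (LinearMap.fst (Kk p) V (Kk p) : V × Kk p →ₗ[Kk p] V)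
  naturality := by intros; apply FGModuleCat.hom_ext; apply LinearMap.ext; intro x; rfl

/-- Precomposition with `V ↦ V ⊕ k`, i.e. `F ↦ (V ↦ F(V ⊕ k))`. -/
def preAdd : FF p ⥤ FF p := (Functor.whiskeringLeft _ _ _).obj (addOne p)

/-- The natural transformation `F ⟶ F(− ⊕ k)` induced by the inclusions `i_V`. -/
def unitPre : 𝟭 (FF p) ⟶ preAdd p where
  app F := Functor.whiskerRight (inclOne p) F
  naturality := by
    intro F G α
    apply NatTrans.ext
    funext V
    exact (α.naturality ((inclOne p).app V)).symm

/-- The difference functor `Δ : 𝓕 → 𝓕`, the cokernel of `F ⟶ F(− ⊕ k)`. -/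
def Delta : FF p ⥤ FF p := cokernel (unitPre p)

/-- Iterates `Δ^n` of the difference functor. -/
def deltaIter : ℕ → (FF p ⥤ FF p)
  | 0 => 𝟭 (FF p)
  | n + 1 => deltaIter n ⋙ Delta p

/-- `F` is polynomial of degree at most `n` if `Δ^{n+1} F = 0`. -/
def IsPolyLE (n : ℕ) (F : FF p) : Prop := IsZero ((deltaIter p (n + 1)).obj F)




def counitPre : preAdd p ⟶ 𝟭 (FF p) where
  app F := Functor.whiskerRight (projOne p) F
  naturality := by
    intro F G α
    apply NatTrans.ext
    funext V
    exact (α.naturality ((projOne p).app V)).symm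

lemma unit_counit : unitPre p ≫ counitPre p = 𝟙 (𝟭 (FF p)) := by
  apply NatTrans.ext; funext F; apply NatTrans.ext; funext V
  have h0 : (inclOne p).app V ≫ (projOne p).app V = 𝟙 V := by
    apply FGModuleCat.hom_ext; apply LinearMap.ext; intro v; rfl
  have h : F.map ((inclOne p).app V) ≫ F.map ((projOne p).app V) = 𝟙 (F.obj V) := by
    rw [← F.map_comp, h0]; exact F.map_id _
  exact h

def sigmaD : Delta p ⟶ preAdd p :=
  cokernel.desc (unitPre p) (𝟙 (preAdd p) - counitPre p ≫ unitPre p)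
    (by simp [← Category.assoc, unit_counit p])

lemma pi_sigma : cokernel.π (unitPre p) ≫ sigmaD p
    = 𝟙 (preAdd p) - counitPre p ≫ unitPre p :=
  cokernel.π_desc _ _ _

lemma sigma_pi : sigmaD p ≫ cokernel.π (unitPre p) = 𝟙 (Delta p) := by
  apply (cancel_epi (cokernel.π (unitPre p))).1
  show (cokernel.π (unitPre p) ≫ sigmaD p) ≫ cokernel.π (unitPre p) =
    cokernel.π (unitPre p) ≫ 𝟙 (cokernel (unitPre p))
  rw [pi_sigma]
  rw [Category.comp_id, Preadditive.sub_comp, Category.id_comp, Category.assoc,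
    cokernel.condition, comp_zero, sub_zero]

lemma preAdd_map_mono {K F : FF p} (α : K ⟶ F) [Mono α] : Mono ((preAdd p).map α) := by
  rw [NatTrans.mono_iff_mono_app]
  intro V
  show Mono (α.app ((addOne p).obj V))
  infer_instance

lemma sigma_app_mono (K : FF p) : Mono ((sigmaD p).app K) := by
  have h : (sigmaD p).app K ≫ (cokernel.π (unitPre p)).app K = 𝟙 ((Delta p).obj K) := by
    rw [← NatTrans.comp_app, sigma_pi]; rfl
  have : Mono ((sigmaD p).app K ≫ (cokernel.π (unitPre p)).app K) := by
    rw [h]; exact SplitMono.mono ⟨𝟙 _, Category.comp_id _⟩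
  exact mono_of_mono _ ((cokernel.π (unitPre p)).app K)

lemma pi_app_epi (K : FF p) : Epi ((cokernel.π (unitPre p)).app K) := by
  have h : (sigmaD p).app K ≫ (cokernel.π (unitPre p)).app K = 𝟙 ((Delta p).obj K) := by
    rw [← NatTrans.comp_app, sigma_pi]; rfl
  have : Epi ((sigmaD p).app K ≫ (cokernel.π (unitPre p)).app K) := by
    rw [h]; exact SplitEpi.epi ⟨𝟙 _, Category.comp_id _⟩
  exact epi_of_epi ((sigmaD p).app K) _

lemma delta_map_mono {K F : FF p} (α : K ⟶ F) [Mono α] : Mono ((Delta p).map α) := by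
  have hnat := (sigmaD p).naturality α
  have h1 : Mono ((sigmaD p).app K ≫ (preAdd p).map α) := by
    have := sigma_app_mono p K
    have := preAdd_map_mono p α
    exact mono_comp _ _
  rw [← hnat] at h1
  exact mono_of_mono ((Delta p).map α) ((sigmaD p).app F)

lemma preAdd_map_zero (K F : FF p) : (preAdd p).map (0 : K ⟶ F) = 0 := by
  ext V x
  rfl

lemma delta_map_zero (K F : FF p) : (Delta p).map (0 : K ⟶ F) = 0 := by
  have := pi_app_epi p K
  show (cokernel (unitPre p)).map (0 : K ⟶ F) = 0
  rw [← cancel_epi ((cokernel.π (unitPre p)).app K)]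
  have hnat := (cokernel.π (unitPre p)).naturality (0 : K ⟶ F)
  rw [comp_zero, ← hnat, preAdd_map_zero, zero_comp]

lemma deltaIter_map_zero (m : ℕ) (K F : FF p) :
    (deltaIter p m).map (0 : K ⟶ F) = 0 := by
  induction m with
  | zero => rfl
  | succ m ih =>
    show (Delta p).map ((deltaIter p m).map 0) = 0
    rw [ih, delta_map_zero]

lemma deltaIter_map_mono (m : ℕ) {K F : FF p} (α : K ⟶ F) [Mono α] :
    Mono ((deltaIter p m).map α) := by
  induction m with
  | zero => exact inferInstanceAs (Mono α)
  | succ m ih =>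
    show Mono ((Delta p).map ((deltaIter p m).map α))
    exact @delta_map_mono p _ _ _ _ ih

/-- The forgetful functor, i.e. the identity functor `Id ∈ 𝓕`. -/
def idFun : FF p := forget₂ (FGModuleCat.{0} (Kk p)) (ModuleCat.{0} (Kk p))

/-- The constant functor with value `k`, i.e. the unit of `𝓕`. -/
def constK : FF p := (Functor.const _).obj (ModuleCat.of (Kk p) (Kk p))

/-- The functor `P ∈ 𝓕`, `V ↦ k[V]`. -/
def Pfun : FF p where
  obj V := ModuleCat.of (Kk p) ((V : Type) →₀ Kk p)
  map f := ModuleCat.ofHom (Finsupp.lmapDomain (Kk p) (Kk p) f)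
  map_id V := by
    apply ModuleCat.hom_ext
    exact Finsupp.lmapDomain_id _ _
  map_comp f g := by
    apply ModuleCat.hom_ext
    apply Finsupp.lhom_ext
    intro a b
    simp only [ModuleCat.hom_comp, ModuleCat.hom_ofHom, LinearMap.comp_apply,
      Finsupp.lmapDomain_apply, Finsupp.mapDomain_single] <;> rfl

/-- The augmentation `P ⟶ k`, `[v] ↦ 1`. -/
def augP : Pfun p ⟶ constK p where
  app V := ModuleCat.ofHom (Finsupp.linearCombination (Kk p) (fun _ : (V : Type) => (1 : Kk p)))
  naturality := by
    intro V W f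
    apply ModuleCat.hom_ext
    apply Finsupp.lhom_ext
    intro a b
    simp only [Pfun, constK, ModuleCat.hom_comp, ModuleCat.hom_ofHom]
    erw [LinearMap.comp_apply, LinearMap.comp_apply, Finsupp.lmapDomain_apply,
      Finsupp.mapDomain_single, Finsupp.linearCombination_single,
      Finsupp.linearCombination_single]


/-- The reduced functor `P̄ ∈ 𝓕`, the kernel of the augmentation `P ⟶ k`. -/
def Pbar : FF p := kernel (augP p)

/-- The functor `I_W ∈ 𝓕`, `V ↦ (functions Hom(V,W) → k)`. -/
def Ifun (W : FGModuleCat.{0} (Kk p)) : FF p where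
  obj V := ModuleCat.of (Kk p) ((V →ₗ[Kk p] W) → Kk p)
  map {V V'} f := ModuleCat.ofHom (LinearMap.funLeft (Kk p) (Kk p)
    (fun ℓ : (V' : Type _) →ₗ[Kk p] W => ℓ ∘ₗ f.hom.hom))
  map_id V := by ext φ; rfl
  map_comp f g := by ext φ; rfl

/-- The functor `I = I_k ∈ 𝓕`. -/
def Icfun : FF p := Ifun p (FGModuleCat.of (Kk p) (Kk p))

/-- Evaluation at the zero homomorphism, `I ⟶ k`. -/
def evalZero : Icfun p ⟶ constK p where
  app V := ModuleCat.ofHom (LinearMap.proj (0 : V →ₗ[Kk p] Kk p))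
  naturality := by
    intro V W f
    ext φ
    have : (0 : (W : Type) →ₗ[Kk p] Kk p) ∘ₗ f.hom.hom = 0 := by
      ext x; rfl
    exact congrArg φ this

/-- The reduced functor `Ī ∈ 𝓕` of functions vanishing at `0`. -/
def Ibar : FF p := kernel (evalZero p)


/-- The largest subspace of `F(V)` belonging to a subfunctor of `F` that is
polynomial of degree at most `n`; objectwise, this is the value `(p_n F)(V)`. -/
def pSub (n : ℕ) (F : FF p) (V : FGModuleCat.{0} (Kk p)) :
    Submodule (Kk p) (F.obj V) :=
  ⨆ (A : FF p) (j : A ⟶ F) (_ : Mono j) (_ : IsPolyLE p n A),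
    LinearMap.range (j.app V).hom


/-- Iterated objectwise tensor powers `A^{⊗n}` of an object of `𝓕`. -/
def objPow (p : ℕ) [Fact p.Prime] (A : FF p) : ℕ → FF p
  | 0 => 𝟙_ (FF p)
  | 1 => A
  | n + 2 => objPow p A (n + 1) ⊗ A

lemma whiskerRight_zero_FF {A B X : FF p} : (0 : A ⟶ B) ▷ X = 0 := by
  ext V x
  have h : ((0 : A ⟶ B) ▷ X).app V = (0 : A ⟶ B).app V ▷ X.obj V :=
    Monoidal.whiskerRight_app
  have h2 : (0 : A ⟶ B).app V = 0 := rfl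
  rw [h, h2, MonoidalPreadditive.zero_whiskerRight]
  rfl

lemma poly_kernel (n : ℕ) (F : FF p)
    (adj : deltaIter p (n + 1) ⊣ tensorRight (objPow p (Ibar p) (n + 1))) :
    IsPolyLE p n (kernel (adj.unit.app F)) := by
  have htri := adj.left_triangle_components F
  have hmonoη : Mono ((deltaIter p (n + 1)).map (adj.unit.app F)) := by
    have : Mono ((deltaIter p (n + 1)).map (adj.unit.app F) ≫
        adj.counit.app ((deltaIter p (n + 1)).obj F)) := by
      rw [htri]
      exact { right_cancellation := fun g h w => by simpa using w }
    exact mono_of_mono _ (adj.counit.app ((deltaIter p (n + 1)).obj F))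
  have hι : Mono ((deltaIter p (n + 1)).map (kernel.ι (adj.unit.app F))) :=
    deltaIter_map_mono p (n + 1) _
  have h0 : (deltaIter p (n + 1)).map (kernel.ι (adj.unit.app F)) = 0 := by
    rw [← cancel_mono ((deltaIter p (n + 1)).map (adj.unit.app F)),
      ← (deltaIter p (n + 1)).map_comp, kernel.condition,
      deltaIter_map_zero, zero_comp]
  show IsZero ((deltaIter p (n + 1)).obj (kernel (adj.unit.app F)))
  rw [IsZero.iff_id_eq_zero]
  rw [← cancel_mono ((deltaIter p (n + 1)).map (kernel.ι (adj.unit.app F))),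
    Category.id_comp, h0, zero_comp]

lemma factor_zero (n : ℕ) {A F : FF p}
    (adj : deltaIter p (n + 1) ⊣ tensorRight (objPow p (Ibar p) (n + 1)))
    (f : A ⟶ F) (hA : IsPolyLE p n A) :
    f ≫ adj.unit.app F = 0 := by
  have hnat := adj.unit.naturality f
  have hz : (deltaIter p (n + 1)).map f = 0 := hA.eq_zero_of_src _
  have hR : (tensorRight (objPow p (Ibar p) (n + 1))).map
      ((deltaIter p (n + 1)).map f) = 0 := by
    rw [hz]
    exact whiskerRight_zero_FF p
  have heq : f ≫ adj.unit.app F = adj.unit.app A ≫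
      (tensorRight (objPow p (Ibar p) (n + 1))).map ((deltaIter p (n + 1)).map f) := by
    simpa using hnat
  rw [heq, hR, comp_zero]


/-- For every `F ∈ 𝓕` and `n ≥ 0`, and any adjunction between `Δ^{n+1}`
and `− ⊗ Ī^{⊗(n+1)}`, the subfunctor `ker(η_F : F → Δ^{n+1}F ⊗ Ī^{⊗(n+1)})` (with `η` the
unit of the adjunction) is polynomial of degree at most `n` and contains every subfunctor
of `F` that is polynomial of degree at most `n`; consequently the inclusion of the full
subcategory of polynomial functors of degree at most `n` admits a right adjoint. -/
theorem stmt_6 (p : ℕ) [Fact p.Prime] (n : ℕ) (F : FF p)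
    (adj : deltaIter p (n + 1) ⊣ tensorRight (objPow p (Ibar p) (n + 1))) :
    IsPolyLE p n (kernel (adj.unit.app F)) ∧
    (∀ (A : FF p) (j : A ⟶ F), Mono j → IsPolyLE p n A →
      ∃ u : A ⟶ kernel (adj.unit.app F), u ≫ kernel.ι (adj.unit.app F) = j) ∧
    (ObjectProperty.ι (IsPolyLE p n)).IsLeftAdjoint := by
  refine ⟨poly_kernel p n F adj, ?_, ?_⟩
  · intro A j _ hA
    exact ⟨kernel.lift _ j (factor_zero p n adj j hA), kernel.lift_ι _ _ _⟩
  · let e : ∀ (X : ObjectProperty.FullSubcategory (IsPolyLE p n)) (Y : FF p),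
        ((ObjectProperty.ι (IsPolyLE p n)).obj X ⟶ Y) ≃
        (X ⟶ (⟨kernel (adj.unit.app Y), poly_kernel p n Y adj⟩ :
          ObjectProperty.FullSubcategory (IsPolyLE p n))) :=
      fun X Y =>
        { toFun := fun f => ObjectProperty.homMk (kernel.lift _ f (factor_zero p n adj f X.property))
          invFun := fun u => u.hom ≫ kernel.ι (adj.unit.app Y)
          left_inv := fun f => kernel.lift_ι _ _ _
          right_inv := fun u => by
            apply ObjectProperty.hom_ext
            rw [← cancel_mono (kernel.ι (adj.unit.app Y))]
            exact kernel.lift_ι _ _ _ }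
    have he : ∀ (X' X : ObjectProperty.FullSubcategory (IsPolyLE p n)) (Y : FF p)
        (f : X' ⟶ X) (g : (ObjectProperty.ι (IsPolyLE p n)).obj X ⟶ Y),
        e X' Y ((ObjectProperty.ι (IsPolyLE p n)).map f ≫ g) = f ≫ e X Y g := by
      intro X' X Y f g
      simp only [e, Equiv.coe_fn_mk]
      apply ObjectProperty.hom_ext
      rw [← cancel_mono (kernel.ι (adj.unit.app Y))]
      change kernel.lift _ _ _ ≫ _ = (f.hom ≫ kernel.lift _ _ _) ≫ _
      rw [kernel.lift_ι, Category.assoc, kernel.lift_ι, ObjectProperty.ι_map]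
    exact (Adjunction.adjunctionOfEquivRight e he).isLeftAdjoint
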